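/- The cone with Lipschitz non-flat angle is not s-minimal via the Euler–Lagrange equation: if E₀₀ ⊆ ℝ² satisfies E₀₀ ∩ {x₁ < 0} = {x₁ < 0, x₂ < 0} and E₀₀ ∩ {x₁ > 0} = {x₂ < b x₁, x₁ > 0} for some b ≠ 0, then at the point p = (1,b) the s-mean curvature p.v. ∫_{ℝ²} (χ_{ℝ²\E₀₀}(y) − χ_{E₀₀}(y)) |p−y|^{−(2+s)} dy is nonzero. -/
import Mathlib


open MeasureTheory Set Filter
open scoped ENNReal Topology

local notation "E2" => EuclideanSpace ℝ (Fin 2)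

lemma coord_le_norm (x : E2) (i : Fin 2) : |x i| ≤ ‖x‖ := by
  have h := EuclideanSpace.norm_eq x
  have h2 : |x i| = Real.sqrt ((x i) ^ 2) := (Real.sqrt_sq_eq_abs _).symm
  rw [h2, h]
  apply Real.sqrt_le_sqrt
  calc (x i) ^ 2 = ‖x i‖ ^ 2 := by simp [Real.norm_eq_abs, sq_abs]
  _ ≤ ∑ j, ‖x j‖ ^ 2 := Finset.single_le_sum (f := fun j => ‖x j‖ ^ 2) (fun j _ => sq_nonneg _) (Finset.mem_univ i)

lemma line_volume_zero (c d : ℝ) (h : ¬(c = 0 ∧ d = 0)) :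
    volume {y : E2 | d * y 1 = c * y 0} = 0 := by
  set φ : E2 →ₗ[ℝ] ℝ :=
    d • ((EuclideanSpace.proj (1 : Fin 2) : E2 →L[ℝ] ℝ) : E2 →ₗ[ℝ] ℝ)
      - c • ((EuclideanSpace.proj (0 : Fin 2) : E2 →L[ℝ] ℝ) : E2 →ₗ[ℝ] ℝ) with hφ
  have hφy : ∀ y : E2, φ y = d * y 1 - c * y 0 := by
    intro y; simp [hφ]
  have hset : {y : E2 | d * y 1 = c * y 0} = (LinearMap.ker φ : Submodule ℝ E2) := by
    ext y
    simp only [mem_setOf_eq, SetLike.mem_coe, LinearMap.mem_ker, hφy, sub_eq_zero]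
  rw [hset]
  apply Measure.addHaar_submodule
  intro htop
  rw [LinearMap.ker_eq_top] at htop
  rcases not_and_or.1 h with hc | hd
  · have := hφy (EuclideanSpace.single (0 : Fin 2) 1)
    rw [htop] at this
    simp [EuclideanSpace.single_apply] at this
    exact hc this
  · have := hφy (EuclideanSpace.single (1 : Fin 2) 1)
    rw [htop] at this
    simp [EuclideanSpace.single_apply] at this
    exact hd this.symm

lemma kernel_bound {t : ℝ} (ht : 0 < t) {ε r : ℝ} (hε : 0 < ε) (hr : ε ≤ r) :
    r ^ (-t) ≤ (1 + ε⁻¹) ^ t * (1 + r) ^ (-t) := by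
  have hr0 : 0 < r := lt_of_lt_of_le hε hr
  have hεinv : 0 < ε⁻¹ := inv_pos.mpr hε
  have h1 : (1 + ε⁻¹)⁻¹ * (1 + r) ≤ r := by
    rw [inv_mul_le_iff₀ (by positivity)]
    have h2 : 1 ≤ ε⁻¹ * r := by
      calc (1 : ℝ) = ε⁻¹ * ε := (inv_mul_cancel₀ hε.ne').symm
      _ ≤ ε⁻¹ * r := by nlinarith
    nlinarith
  calc r ^ (-t) ≤ ((1 + ε⁻¹)⁻¹ * (1 + r)) ^ (-t) :=
        Real.rpow_le_rpow_of_nonpos (by positivity) h1 (neg_nonpos.mpr ht.le)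
  _ = (1 + ε⁻¹) ^ t * (1 + r) ^ (-t) := by
      rw [Real.mul_rpow (by positivity) (by positivity), Real.inv_rpow (by positivity),
        ← Real.rpow_neg (by positivity), neg_neg]

lemma integrable_majorant (t : ℝ) (ht : 2 < t) (p : E2) :
    Integrable (fun y : E2 => (1 + ‖p - y‖) ^ (-t)) := by
  have h2 : (Module.finrank ℝ E2 : ℝ) < t := by
    rw [finrank_euclideanSpace_fin]; exact_mod_cast ht
  exact (integrable_one_add_norm h2).comp_sub_left p

lemma integrableOn_kernel {s : ℝ} (hs : 0 < s) (p : E2) {ε : ℝ} (hε : 0 < ε) :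
    IntegrableOn (fun y : E2 => ‖p - y‖ ^ (-((2 : ℝ) + s))) (Metric.ball p ε)ᶜ := by
  have ht : (0 : ℝ) < 2 + s := by linarith
  have hmaj : Integrable (fun y : E2 => (1 + ε⁻¹) ^ ((2:ℝ)+s) * (1 + ‖p - y‖) ^ (-((2:ℝ) + s))) :=
    (integrable_majorant _ (by linarith) p).const_mul _
  refine (hmaj.restrict (s := (Metric.ball p ε)ᶜ)).mono' ?_ ?_
  · exact (Measurable.aestronglyMeasurable (by fun_prop)).restrict
  · rw [ae_restrict_iff' measurableSet_ball.compl]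
    refine ae_of_all _ fun y hy => ?_
    have hdist : ε ≤ ‖p - y‖ := by
      have : ¬ dist y p < ε := hy
      rw [← dist_eq_norm, dist_comm]
      exact not_lt.mp this
    have hb := kernel_bound ht hε hdist
    rw [Real.norm_eq_abs, abs_of_nonneg (Real.rpow_nonneg (norm_nonneg _) _)]
    exact hb


/-- The cone which is the lower halfplane for `x₁ < 0` and the subgraph of the line
`x₂ = b x₁` for `x₁ ≥ 0`. -/
def coneSet (b : ℝ) : Set (EuclideanSpace ℝ (Fin 2)) :=
  {x | (x 0 < 0 ∧ x 1 < 0) ∨ (0 ≤ x 0 ∧ x 1 < b * x 0)}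

/-- If `b ≠ 0`, then at the point `p = (1,b)` the s-mean curvature of the cone
`E₀₀` (lower halfplane for `x₁ < 0`, subgraph of `x₂ = b x₁` for `x₁ > 0`) is nonzero:
the principal value exists and differs from zero. -/
theorem cone_mean_curvature_ne_zero (s : ℝ) (hs : 0 < s) (hs1 : s < 1) (b : ℝ) (hb : b ≠ 0)
    (p : EuclideanSpace ℝ (Fin 2)) (hp0 : p 0 = 1) (hp1 : p 1 = b) :
    ∃ L : ℝ, L ≠ 0 ∧
      Tendsto
        (fun ε : ℝ => ∫ y in (Metric.ball p ε)ᶜ,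
          (((coneSet b)ᶜ.indicator (fun _ => (1 : ℝ)) y
              - (coneSet b).indicator (fun _ => (1 : ℝ)) y)
            * ‖p - y‖ ^ (-((2 : ℝ) + s))))
        (𝓝[>] (0 : ℝ)) (𝓝 L) := by
  classical
  have ht2 : (0 : ℝ) < 2 + s := by linarith
  set k : E2 → ℝ := fun y => ‖p - y‖ ^ (-((2 : ℝ) + s)) with hkdef
  have hk_nonneg : ∀ y, 0 ≤ k y := fun y => Real.rpow_nonneg (norm_nonneg _) _
  have hk_meas : Measurable k := by
    rw [hkdef]; fun_prop
  have hmeas0 : Measurable fun y : E2 => y 0 :=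
    (EuclideanSpace.proj (0 : Fin 2)).continuous.measurable
  have hmeas1 : Measurable fun y : E2 => y 1 :=
    (EuclideanSpace.proj (1 : Fin 2)).continuous.measurable
  set H : Set E2 := {y | y 1 < b * y 0} with hHdef
  have measH : MeasurableSet H := measurableSet_lt hmeas1 (hmeas0.const_mul b)
  have measE : MeasurableSet (coneSet b) := by
    have hrepr : coneSet b =
        ({x : E2 | x 0 < 0} ∩ {x : E2 | x 1 < 0}) ∪
          ({x : E2 | 0 ≤ x 0} ∩ {x : E2 | x 1 < b * x 0}) := by
      ext y; simp [coneSet, Set.mem_union, Set.mem_inter_iff]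
    rw [hrepr]
    exact ((measurableSet_lt hmeas0 measurable_const).inter
        (measurableSet_lt hmeas1 measurable_const)).union
      ((measurableSet_le measurable_const hmeas0).inter
        (measurableSet_lt hmeas1 (hmeas0.const_mul b)))
  set g : E2 → ℝ :=
    fun y => (Hᶜ.indicator (fun _ => (1:ℝ)) y - H.indicator (fun _ => (1:ℝ)) y) * k y with hgdef
  set h : E2 → ℝ :=
    fun y => (2 * (H.indicator (fun _ => (1:ℝ)) y
      - (coneSet b).indicator (fun _ => (1:ℝ)) y)) * k y with hhdef
  have hfgh : ∀ y : E2,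
      ((coneSet b)ᶜ.indicator (fun _ => (1 : ℝ)) y
          - (coneSet b).indicator (fun _ => (1 : ℝ)) y) * ‖p - y‖ ^ (-((2 : ℝ) + s))
        = g y + h y := by
    intro y
    simp only [hgdef, hhdef, hkdef]
    by_cases h1 : y ∈ H <;> by_cases h2 : y ∈ coneSet b <;>
      simp [Set.indicator_apply, h1, h2] <;> ring
  have hg_meas : Measurable g := by
    rw [hgdef]
    exact ((measurable_const.indicator measH.compl).sub
      (measurable_const.indicator measH)).mul hk_meas
  have hh_meas : Measurable h := by
    rw [hhdef]
    exact (((measurable_const.indicator measH).sub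
      (measurable_const.indicator measE)).const_mul 2).mul hk_meas
  -- |g| ≤ k
  have hg_abs : ∀ y, ‖g y‖ ≤ k y := by
    intro y
    rw [hgdef]
    rw [Real.norm_eq_abs, abs_mul, abs_of_nonneg (hk_nonneg y)]
    have : |Hᶜ.indicator (fun _ => (1:ℝ)) y - H.indicator (fun _ => (1:ℝ)) y| ≤ 1 := by
      by_cases h1 : y ∈ H <;> simp [Set.indicator_apply, h1]
    nlinarith [hk_nonneg y, abs_nonneg (Hᶜ.indicator (fun _ => (1:ℝ)) y - H.indicator (fun _ => (1:ℝ)) y)]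
  have hgint : ∀ {ε : ℝ}, 0 < ε → IntegrableOn g (Metric.ball p ε)ᶜ := by
    intro ε hε
    refine (integrableOn_kernel hs p hε).mono' hg_meas.aestronglyMeasurable.restrict ?_
    exact ae_of_all _ fun y => hg_abs y
  -- h vanishes on the right halfplane
  have hEH : ∀ y : E2, 0 ≤ y 0 → (y ∈ coneSet b ↔ y ∈ H) := by
    intro y hy
    constructor
    · rintro (⟨h1, _⟩ | ⟨_, h2⟩)
      · linarith
      · exact h2
    · intro h1; exact Or.inr ⟨hy, h1⟩
  have hindEH : ∀ y : E2, (y ∈ coneSet b ↔ y ∈ H) →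
      H.indicator (fun _ => (1:ℝ)) y = (coneSet b).indicator (fun _ => (1:ℝ)) y := by
    intro y hiff
    by_cases hmem : y ∈ H
    · rw [Set.indicator_of_mem hmem, Set.indicator_of_mem (hiff.2 hmem)]
    · rw [Set.indicator_of_notMem hmem, Set.indicator_of_notMem (fun hc => hmem (hiff.1 hc))]
  have hh_zero : ∀ y : E2, 0 ≤ y 0 → h y = 0 := by
    intro y hy
    rw [hhdef]
    simp only
    rw [hindEH y (hEH y hy)]
    ring
  have hfar : ∀ y : E2, y 0 < 0 → 1 ≤ ‖p - y‖ := by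
    intro y hy
    have hle := coord_le_norm (p - y) 0
    have hc : (p - y) 0 = p 0 - y 0 := by simp
    rw [hc, hp0] at hle
    calc (1:ℝ) ≤ |1 - y 0| := by rw [abs_of_pos (by linarith)]; linarith
    _ ≤ ‖p - y‖ := hle
  have hh_abs : ∀ y, ‖h y‖ ≤ 2 * k y := by
    intro y
    rw [hhdef]
    simp only
    rw [Real.norm_eq_abs, abs_mul, abs_of_nonneg (hk_nonneg y), abs_mul]
    have : |H.indicator (fun _ => (1:ℝ)) y - (coneSet b).indicator (fun _ => (1:ℝ)) y| ≤ 1 := by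
      by_cases h1 : y ∈ H <;> by_cases h2 : y ∈ coneSet b <;> simp [Set.indicator_apply, h1, h2]
    have h2' : |(2:ℝ)| = 2 := by norm_num
    rw [h2']
    nlinarith [hk_nonneg y]
  have hh_int : Integrable h := by
    have hmaj : Integrable
        (fun y : E2 => 2 * ((1 + 1⁻¹) ^ ((2:ℝ)+s) * (1 + ‖p - y‖) ^ (-((2:ℝ)+s)))) :=
      ((integrable_majorant _ (by linarith) p).const_mul _).const_mul 2
    refine hmaj.mono' hh_meas.aestronglyMeasurable (ae_of_all _ fun y => ?_)
    by_cases hy : y 0 < 0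
    · have h2 : k y ≤ (1+1⁻¹) ^ ((2:ℝ)+s) * (1 + ‖p-y‖) ^ (-((2:ℝ)+s)) := by
        rw [hkdef]
        exact kernel_bound ht2 one_pos (hfar y hy)
      calc ‖h y‖ ≤ 2 * k y := hh_abs y
      _ ≤ 2 * ((1+1⁻¹) ^ ((2:ℝ)+s) * (1 + ‖p-y‖) ^ (-((2:ℝ)+s))) := by linarith
    · rw [hh_zero y (not_lt.mp hy)]
      simp only [norm_zero]
      positivity
  -- the halfplane part has zero integral by symmetry
  have hline : volume {y : E2 | y 1 = b * y 0} = 0 := by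
    have h0 := line_volume_zero b 1 (by simp)
    have hrepr : {y : E2 | y 1 = b * y 0} = {y : E2 | 1 * y 1 = b * y 0} := by
      ext y; simp
    rw [hrepr]; exact h0
  have hg_zero : ∀ ε : ℝ, ∫ y in (Metric.ball p ε)ᶜ, g y = 0 := by
    intro ε
    rw [← integral_indicator measurableSet_ball.compl]
    set G : E2 → ℝ := ((Metric.ball p ε)ᶜ).indicator g with hGdef
    have key : ∀ y : E2, y 1 ≠ b * y 0 → G (p + p - y) = -G y := by
      intro y hyb
      have hz0 : (p + p - y) 0 = 2 - y 0 := by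
        simp [hp0]; ring
      have hz1 : (p + p - y) 1 = 2 * b - y 1 := by
        simp [hp1]; ring
      have hzH : (p + p - y) ∈ H ↔ y ∉ H := by
        simp only [hHdef, Set.mem_setOf_eq, hz0, hz1, not_lt]
        have hrw : b * (2 - y 0) = 2 * b - b * y 0 := by ring
        rw [hrw]
        constructor
        · intro hc; linarith
        · intro hc
          have := lt_of_le_of_ne hc (Ne.symm hyb)
          linarith
      have hknorm : k (p + p - y) = k y := by
        rw [hkdef]
        simp only
        have hpe : p - (p + p - y) = -(p - y) := by abel
        rw [hpe, norm_neg]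
      have hdist : dist (p + p - y) p = dist y p := by
        rw [dist_eq_norm, dist_eq_norm]
        have h1 : p + p - y - p = -(y - p) := by abel
        rw [h1, norm_neg]
      have hball : (p + p - y) ∈ (Metric.ball p ε)ᶜ ↔ y ∈ (Metric.ball p ε)ᶜ := by
        simp [Metric.mem_ball, hdist]
      have hgz : g (p + p - y) = -g y := by
        rw [hgdef]
        simp only
        rw [hknorm]
        by_cases hyH : y ∈ H
        · have h1 : (p + p - y) ∉ H := fun hc => (hzH.1 hc) hyH
          rw [Set.indicator_of_notMem h1, Set.indicator_of_mem (by exact h1 : (p+p-y) ∈ Hᶜ),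
            Set.indicator_of_mem hyH, Set.indicator_of_notMem (not_not_intro hyH : ¬ y ∈ Hᶜ)]
          ring
        · have h1 : (p + p - y) ∈ H := hzH.2 hyH
          rw [Set.indicator_of_mem h1, Set.indicator_of_notMem (not_not_intro h1 : ¬ (p+p-y) ∈ Hᶜ),
            Set.indicator_of_notMem hyH, Set.indicator_of_mem (by exact hyH : y ∈ Hᶜ)]
          ring
      by_cases hmem : y ∈ (Metric.ball p ε)ᶜ
      · rw [hGdef]
        rw [Set.indicator_of_mem (hball.2 hmem), Set.indicator_of_mem hmem]
        exact hgz
      · rw [hGdef]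
        rw [Set.indicator_of_notMem (fun hc => hmem (hball.1 hc)), Set.indicator_of_notMem hmem]
        simp
    have hae : (fun y => G (p + p - y)) =ᵐ[volume] fun y => -G y := by
      rw [Filter.EventuallyEq, ae_iff]
      refine measure_mono_null (fun y hy => ?_) hline
      simp only [Set.mem_setOf_eq] at hy ⊢
      by_contra hyb
      exact hy (key y hyb)
    have h1 : ∫ y, G (p + p - y) = ∫ y, G y := integral_sub_left_eq_self G volume (p + p)
    rw [integral_congr_ae hae, integral_neg] at h1
    linarith
  -- convergence of the integrable part
  have hptendsto : Tendsto (fun ε : ℝ => ∫ y in (Metric.ball p ε)ᶜ, h y)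
      (𝓝[>] (0:ℝ)) (𝓝 (∫ y, h y)) := by
    have hrw : ∀ ε : ℝ, ∫ y in (Metric.ball p ε)ᶜ, h y
        = ∫ y, ((Metric.ball p ε)ᶜ).indicator h y :=
      fun ε => (integral_indicator measurableSet_ball.compl).symm
    simp_rw [hrw]
    refine tendsto_integral_filter_of_dominated_convergence (fun y => ‖h y‖)
      (Eventually.of_forall fun ε =>
        (hh_meas.indicator measurableSet_ball.compl).aestronglyMeasurable)
      (Eventually.of_forall fun ε => ae_of_all _ fun y => ?_) hh_int.norm ?_
    · exact norm_indicator_le_norm_self h y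
    · have hpne : ∀ᵐ y : E2, y ≠ p := by
        rw [ae_iff]
        refine measure_mono_null (fun y hy => ?_) hline
        simp only [Set.mem_setOf_eq, not_not] at hy
        simp only [Set.mem_setOf_eq, hy, hp0, hp1]
        ring
      filter_upwards [hpne] with y hy
      have hdy : 0 < dist y p := dist_pos.mpr hy
      refine Tendsto.congr' ?_ tendsto_const_nhds
      filter_upwards [Ioo_mem_nhdsGT_of_mem (left_mem_Ico.mpr hdy)] with ε hε
      have : y ∈ (Metric.ball p ε)ᶜ := by
        simp only [Set.mem_compl_iff, Metric.mem_ball, not_lt]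
        exact le_of_lt hε.2
      rw [Set.indicator_of_mem this]
  -- the limit is nonzero
  have hLne : ∫ y, h y ≠ 0 := by
    have hNzero : volume ({y : E2 | y 0 = 0} ∪ {y : E2 | y 1 = 0} ∪ {y : E2 | y 1 = b * y 0})
        = 0 := by
      refine measure_union_null (measure_union_null ?_ ?_) hline
      · have h0 := line_volume_zero 1 0 (by simp)
        have hrepr : {y : E2 | y 0 = 0} = {y : E2 | 0 * y 1 = 1 * y 0} := by
          ext y; simp [eq_comm]
        rw [hrepr]; exact h0
      · have h0 := line_volume_zero 0 1 (by simp)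
        have hrepr : {y : E2 | y 1 = 0} = {y : E2 | 1 * y 1 = 0 * y 0} := by
          ext y; simp
        rw [hrepr]; exact h0
    have c0 : Continuous fun y : E2 => y 0 := (EuclideanSpace.proj (0 : Fin 2)).continuous
    have c1 : Continuous fun y : E2 => y 1 := (EuclideanSpace.proj (1 : Fin 2)).continuous
    have hk_pos : ∀ y : E2, y 0 < 0 → 0 < k y := by
      intro y hy
      rw [hkdef]
      exact Real.rpow_pos_of_pos (lt_of_lt_of_le one_pos (hfar y hy)) _
    have hsetint : ∀ R : Set E2, MeasurableSet R → IsOpen R → R.Nonempty →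
        (∀ y ∈ R, y 0 < 0) → 0 < ∫ y in R, k y := by
      intro R measR openR hne hneg
      have hRsub : R ⊆ (Metric.ball p 1)ᶜ := by
        intro y hy
        simp only [Set.mem_compl_iff, Metric.mem_ball, not_lt]
        calc (1:ℝ) ≤ ‖p - y‖ := hfar y (hneg y hy)
        _ = dist y p := by rw [dist_eq_norm, norm_sub_rev]
      have hkR : IntegrableOn k R := by
        have := (integrableOn_kernel hs p one_pos).mono_set hRsub
        rw [hkdef]; exact this
      rw [setIntegral_pos_iff_support_of_nonneg_ae (ae_of_all _ fun y => hk_nonneg y) hkR]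
      refine lt_of_lt_of_le (openR.measure_pos volume hne) (measure_mono fun y hy => ?_)
      exact ⟨Function.mem_support.mpr (hk_pos y (hneg y hy)).ne', hy⟩
    rcases hb.lt_or_gt with hbneg | hbpos
    · -- case b < 0
      set R : Set E2 := {y : E2 | y 0 < 0 ∧ 0 < y 1 ∧ y 1 < b * y 0} with hRdef
      have measR : MeasurableSet R := by
        rw [hRdef]
        exact (measurableSet_lt hmeas0 measurable_const).inter
          ((measurableSet_lt measurable_const hmeas1).inter
            (measurableSet_lt hmeas1 (hmeas0.const_mul b)))
      have openR : IsOpen R := by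
        rw [hRdef]
        exact (isOpen_lt c0 continuous_const).inter
          ((isOpen_lt continuous_const c1).inter (isOpen_lt c1 (continuous_const.mul c0)))
      have hne : R.Nonempty := by
        refine ⟨EuclideanSpace.single (0 : Fin 2) (-1) + EuclideanSpace.single (1 : Fin 2) (-(b/2)), ?_⟩
        have hx0 : (EuclideanSpace.single (0 : Fin 2) (-1)
            + EuclideanSpace.single (1 : Fin 2) (-(b/2)) : E2) 0 = -1 := by
          simp [EuclideanSpace.single_apply]
        have hx1 : (EuclideanSpace.single (0 : Fin 2) (-1)
            + EuclideanSpace.single (1 : Fin 2) (-(b/2)) : E2) 1 = -(b/2) := by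
          simp [EuclideanSpace.single_apply]
        rw [hRdef]
        refine ⟨by rw [hx0]; norm_num, by rw [hx1]; linarith, ?_⟩
        rw [hx0, hx1]
        nlinarith
      have key : ∀ y : E2, y 0 ≠ 0 → y 1 ≠ 0 → y 1 ≠ b * y 0 →
          h y = 2 * R.indicator k y := by
        intro y hy0 hy1 hyb
        by_cases hR : y ∈ R
        · have hRy : y 0 < 0 ∧ 0 < y 1 ∧ y 1 < b * y 0 := hR
          have hH : y ∈ H := hRy.2.2
          have hE : y ∉ coneSet b := by
            rintro (⟨_, hc⟩ | ⟨hc, _⟩) <;> [linarith [hRy.2.1]; linarith [hRy.1]]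
          rw [hhdef]
          simp only
          rw [Set.indicator_of_mem hH, Set.indicator_of_notMem hE, Set.indicator_of_mem hR]
          ring
        · have hsame : y ∈ H ↔ y ∈ coneSet b := by
            rcases lt_or_gt_of_ne hy0 with hneg | hpos
            · have hby0 : 0 < b * y 0 := mul_pos_of_neg_of_neg hbneg hneg
              rcases lt_or_gt_of_ne hyb with hlt | hgt
              · have hy1neg : y 1 < 0 := by
                  rcases lt_or_gt_of_ne hy1 with hn | hp
                  · exact hn
                  · exact absurd (show y ∈ R from ⟨hneg, hp, hlt⟩) hR
                exact iff_of_true hlt (Or.inl ⟨hneg, hy1neg⟩)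
              · refine iff_of_false (fun hc => absurd hc (not_lt.mpr hgt.le)) ?_
                rintro (⟨_, hc⟩ | ⟨hc, _⟩) <;> linarith
            · constructor
              · intro hH; exact Or.inr ⟨hpos.le, hH⟩
              · rintro (⟨hc, _⟩ | ⟨_, hc⟩)
                · linarith
                · exact hc
          rw [hhdef]
          simp only
          rw [hindEH y hsame.symm, Set.indicator_of_notMem hR]
          ring
      have hae : h =ᵐ[volume] fun y => 2 * R.indicator k y := by
        rw [Filter.EventuallyEq, ae_iff]
        refine measure_mono_null (fun y hy => ?_) hNzero
        simp only [Set.mem_setOf_eq] at hy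
        simp only [Set.mem_union, Set.mem_setOf_eq]
        by_contra hc
        push_neg at hc
        exact hy (key y hc.1.1 hc.1.2 hc.2)
      have hint : ∫ y, h y = 2 * ∫ y in R, k y := by
        rw [integral_congr_ae hae, integral_const_mul, integral_indicator measR]
      rw [hint]
      have := hsetint R measR openR hne (fun y hy => hy.1)
      positivity
    · -- case b > 0
      set R : Set E2 := {y : E2 | y 0 < 0 ∧ b * y 0 < y 1 ∧ y 1 < 0} with hRdef
      have measR : MeasurableSet R := by
        rw [hRdef]
        exact (measurableSet_lt hmeas0 measurable_const).inter
          ((measurableSet_lt (hmeas0.const_mul b) hmeas1).inter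
            (measurableSet_lt hmeas1 measurable_const))
      have openR : IsOpen R := by
        rw [hRdef]
        exact (isOpen_lt c0 continuous_const).inter
          ((isOpen_lt (continuous_const.mul c0) c1).inter (isOpen_lt c1 continuous_const))
      have hne : R.Nonempty := by
        refine ⟨EuclideanSpace.single (0 : Fin 2) (-1) + EuclideanSpace.single (1 : Fin 2) (-(b/2)), ?_⟩
        have hx0 : (EuclideanSpace.single (0 : Fin 2) (-1)
            + EuclideanSpace.single (1 : Fin 2) (-(b/2)) : E2) 0 = -1 := by
          simp [EuclideanSpace.single_apply]
        have hx1 : (EuclideanSpace.single (0 : Fin 2) (-1)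
            + EuclideanSpace.single (1 : Fin 2) (-(b/2)) : E2) 1 = -(b/2) := by
          simp [EuclideanSpace.single_apply]
        rw [hRdef]
        refine ⟨by rw [hx0]; norm_num, ?_, by rw [hx1]; linarith⟩
        rw [hx0, hx1]
        nlinarith
      have key : ∀ y : E2, y 0 ≠ 0 → y 1 ≠ 0 → y 1 ≠ b * y 0 →
          h y = -(2 * R.indicator k y) := by
        intro y hy0 hy1 hyb
        by_cases hR : y ∈ R
        · have hRy : y 0 < 0 ∧ b * y 0 < y 1 ∧ y 1 < 0 := hR
          have hE : y ∈ coneSet b := Or.inl ⟨hRy.1, hRy.2.2⟩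
          have hH : y ∉ H := fun hc => absurd hc (not_lt.mpr hRy.2.1.le)
          rw [hhdef]
          simp only
          rw [Set.indicator_of_notMem hH, Set.indicator_of_mem hE, Set.indicator_of_mem hR]
          ring
        · have hsame : y ∈ H ↔ y ∈ coneSet b := by
            rcases lt_or_gt_of_ne hy0 with hneg | hpos
            · have hby0 : b * y 0 < 0 := mul_neg_of_pos_of_neg hbpos hneg
              rcases lt_or_gt_of_ne hyb with hlt | hgt
              · exact iff_of_true hlt (Or.inl ⟨hneg, by linarith⟩)
              · have hy1pos : 0 < y 1 := by
                  rcases lt_or_gt_of_ne hy1 with hn | hp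
                  · exact absurd (show y ∈ R from ⟨hneg, hgt, hn⟩) hR
                  · exact hp
                refine iff_of_false (fun hc => absurd hc (not_lt.mpr hgt.le)) ?_
                rintro (⟨_, hc⟩ | ⟨hc, _⟩) <;> linarith
            · constructor
              · intro hH; exact Or.inr ⟨hpos.le, hH⟩
              · rintro (⟨hc, _⟩ | ⟨_, hc⟩)
                · linarith
                · exact hc
          rw [hhdef]
          simp only
          rw [hindEH y hsame.symm, Set.indicator_of_notMem hR]
          ring
      have hae : h =ᵐ[volume] fun y => -(2 * R.indicator k y) := by
        rw [Filter.EventuallyEq, ae_iff]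
        refine measure_mono_null (fun y hy => ?_) hNzero
        simp only [Set.mem_setOf_eq] at hy
        simp only [Set.mem_union, Set.mem_setOf_eq]
        by_contra hc
        push_neg at hc
        exact hy (key y hc.1.1 hc.1.2 hc.2)
      have hint : ∫ y, h y = -(2 * ∫ y in R, k y) := by
        rw [integral_congr_ae hae, integral_neg, integral_const_mul, integral_indicator measR]
      rw [hint]
      have := hsetint R measR openR hne (fun y hy => hy.1)
      intro hc
      nlinarith
  refine ⟨∫ y, h y, hLne, ?_⟩
  refine Tendsto.congr' ?_ hptendsto
  filter_upwards [self_mem_nhdsWithin] with ε hε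
  have hεpos : (0:ℝ) < ε := hε
  have hsplit : ∫ y in (Metric.ball p ε)ᶜ,
      (((coneSet b)ᶜ.indicator (fun _ => (1 : ℝ)) y
          - (coneSet b).indicator (fun _ => (1 : ℝ)) y) * ‖p - y‖ ^ (-((2 : ℝ) + s)))
      = ∫ y in (Metric.ball p ε)ᶜ, (g y + h y) := by
    exact integral_congr_ae (ae_of_all _ fun y => hfgh y)
  rw [hsplit, integral_add (hgint hεpos) hh_int.integrableOn, hg_zero ε, zero_add]
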